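/- Let λ > 0, c₁ > 0, c₂ > 0, and let g(w) = c₁w for 0 ≤ w ≤ 1 and g(w) = c₁ + c₂(w-1) for w > 1. For 0 < d_x ≤ 2c₁, the spatial autocorrelation of the g-class OU∧ process equals [(c₁ + (c₂-c₁)e^{-2λ(1 - d_x/(2c₁))}) e^{-λ d_x/c₁}] / [c₁ + (c₂-c₁)e^{-2λ}], and for d_x > 2c₁ it equals c₂ e^{-2λ(1 + (d_x - 2c₁)/(2c₂))} / [c₁ + (c₂-c₁)e^{-2λ}]. -/

import Mathlib

open MeasureTheory Real Set Filter Topology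

noncomputable def FF (a p q x : ℝ) : ℝ := -(((p*x+q)/a + p/a^2) * Real.exp (-(a*x)))

lemma hasDerivAt_FF (a p q : ℝ) (ha : a ≠ 0) (x : ℝ) :
    HasDerivAt (FF a p q) ((p*x+q) * Real.exp (-(a*x))) x := by
  have h1 : HasDerivAt (fun x : ℝ => (p*x+q)/a + p/a^2) (p/a) x := by
    have : HasDerivAt (fun x : ℝ => p*x+q) p x := by
      simpa using ((hasDerivAt_id x).const_mul p).add_const q
    simpa using (this.div_const a).add_const (p/a^2)
  have h2 : HasDerivAt (fun x : ℝ => Real.exp (-(a*x))) (-a * Real.exp (-(a*x))) x := by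
    have hx : HasDerivAt (fun x : ℝ => -(a*x)) (-a) x := by
      simpa using ((hasDerivAt_id x).const_mul (-a))
    simpa [mul_comm] using hx.exp
  have : HasDerivAt (FF a p q) _ x := (h1.mul h2).neg
  convert this using 1
  field_simp
  ring

lemma tendsto_FF (a p q : ℝ) (ha : 0 < a) : Tendsto (FF a p q) atTop (𝓝 0) := by
  have h1 : Tendsto (fun x : ℝ => x * Real.exp (-x)) atTop (𝓝 0) := by
    simpa using Real.tendsto_pow_mul_exp_neg_atTop_nhds_zero 1
  have h2 : Tendsto (fun x : ℝ => a * x) atTop atTop :=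
    Filter.Tendsto.const_mul_atTop ha tendsto_id
  have h3 : Tendsto (fun x : ℝ => (a*x) * Real.exp (-(a*x))) atTop (𝓝 0) := h1.comp h2
  have h4 : Tendsto (fun x : ℝ => Real.exp (-(a*x))) atTop (𝓝 0) :=
    Real.tendsto_exp_atBot.comp (tendsto_neg_atBot_iff.mpr h2)
  have : Tendsto (fun x : ℝ => -((p/a^2) * ((a*x) * Real.exp (-(a*x))) + (q/a + p/a^2) * Real.exp (-(a*x)))) atTop (𝓝 (-((p/a^2) * 0 + (q/a + p/a^2) * 0))) :=
    (((h3.const_mul (p/a^2)).add (h4.const_mul (q/a + p/a^2)))).neg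
  simp only [mul_zero, add_zero, neg_zero] at this
  refine this.congr fun x => ?_
  unfold FF
  field_simp
  ring

lemma integral_Ioi_linexp (a p q b : ℝ) (ha : 0 < a)
    (hnn : ∀ x ∈ Ioi b, 0 ≤ (p*x+q) * Real.exp (-(a*x))) :
    ∫ x in Ioi b, (p*x+q) * Real.exp (-(a*x)) = ((p*b+q)/a + p/a^2) * Real.exp (-(a*b)) := by
  have h := integral_Ioi_of_hasDerivAt_of_nonneg' (g := FF a p q)
    (fun x _ => hasDerivAt_FF a p q ha.ne' x) hnn (tendsto_FF a p q ha)
  rw [h]; unfold FF; ring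

lemma integrableOn_Ioi_linexp (a p q b : ℝ) (ha : 0 < a)
    (hnn : ∀ x ∈ Ioi b, 0 ≤ (p*x+q) * Real.exp (-(a*x))) :
    IntegrableOn (fun x => (p*x+q) * Real.exp (-(a*x))) (Ioi b) :=
  integrableOn_Ioi_deriv_of_nonneg' (fun x _ => hasDerivAt_FF a p q ha.ne' x) hnn (tendsto_FF a p q ha)

lemma integral_Ioc_linexp (a p q s t : ℝ) (ha : a ≠ 0) (hst : s ≤ t) :
    ∫ x in Ioc s t, (p*x+q) * Real.exp (-(a*x)) = FF a p q t - FF a p q s := by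
  rw [← intervalIntegral.integral_of_le hst]
  exact intervalIntegral.integral_eq_sub_of_hasDerivAt (fun x _ => hasDerivAt_FF a p q ha x)
    (Continuous.intervalIntegrable (by continuity) s t)

/-- Spatial autocorrelation of the g-class OU∧ process with piecewise-linear
`g(w) = c₁ w` for `w ≤ 1` and `g(w) = c₁ + c₂ (w - 1)` for `w > 1`. -/
theorem gclass_piecewise_spatial_autocorrelation
    (lam c₁ c₂ d_x : ℝ) (hlam : 0 < lam) (hc₁ : 0 < c₁) (hc₂ : 0 < c₂) (hd : 0 < d_x)
    (g : ℝ → ℝ) (hg : g = fun w => if w ≤ 1 then c₁ * w else c₁ + c₂ * (w - 1))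
    (gi : ℝ) (hgi : gi = if d_x ≤ 2 * c₁ then d_x / (2 * c₁)
      else 1 + (d_x - 2 * c₁) / (2 * c₂))
    (ρ : ℝ)
    (hρ : ρ = (∫ w in Set.Ioi (0:ℝ),
        (2 * g (w + gi) - d_x) * Real.exp (-(2 * lam * (w + gi)))) /
      (∫ w in Set.Ioi (0:ℝ), 2 * g w * Real.exp (-(2 * lam * w)))) :
    (d_x ≤ 2 * c₁ →
      ρ = (c₁ + (c₂ - c₁) * Real.exp (-(2 * lam * (1 - d_x / (2 * c₁))))) *
          Real.exp (-(lam * d_x / c₁)) /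
          (c₁ + (c₂ - c₁) * Real.exp (-(2 * lam))))
    ∧ (2 * c₁ < d_x →
      ρ = c₂ * Real.exp (-(2 * lam * (1 + (d_x - 2 * c₁) / (2 * c₂)))) /
          (c₁ + (c₂ - c₁) * Real.exp (-(2 * lam)))) := by
  set a : ℝ := 2 * lam with ha_def
  have ha : 0 < a := by positivity
  -- denominator
  have hD : (∫ w in Set.Ioi (0:ℝ), 2 * g w * Real.exp (-(a * w)))
      = (2/a^2) * (c₁ + (c₂ - c₁) * Real.exp (-a)) := by
    have e1 : EqOn (fun w => 2 * g w * Real.exp (-(a*w)))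
        (fun w => (2*c₁*w + 0) * Real.exp (-(a*w))) (Ioc 0 1) := by
      intro w hw
      simp only [hg]
      rw [if_pos hw.2]; ring
    have e2 : EqOn (fun w => 2 * g w * Real.exp (-(a*w)))
        (fun w => (2*c₂*w + (2*c₁-2*c₂)) * Real.exp (-(a*w))) (Ioi 1) := by
      intro w hw
      simp only [hg]
      rw [if_neg (not_le.mpr hw)]; ring
    have i2nn : ∀ x ∈ Ioi (1:ℝ), 0 ≤ (2*c₂*x + (2*c₁-2*c₂)) * Real.exp (-(a*x)) := by
      intro x hx
      have h1 : (1:ℝ) < x := hx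
      have h2 : 0 ≤ 2*c₂*x + (2*c₁-2*c₂) := by nlinarith
      exact mul_nonneg h2 (Real.exp_pos _).le
    have hint1 : IntegrableOn (fun w => 2 * g w * Real.exp (-(a*w))) (Ioc (0:ℝ) 1) :=
      ((Continuous.integrableOn_Ioc (by continuity))).congr_fun e1.symm measurableSet_Ioc
    have hint2 : IntegrableOn (fun w => 2 * g w * Real.exp (-(a*w))) (Ioi (1:ℝ)) :=
      (integrableOn_Ioi_linexp a (2*c₂) (2*c₁-2*c₂) 1 ha i2nn).congr_fun e2.symm measurableSet_Ioi
    rw [← Ioc_union_Ioi_eq_Ioi (zero_le_one (α := ℝ)),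
      setIntegral_union (Ioc_disjoint_Ioi le_rfl) measurableSet_Ioi hint1 hint2,
      setIntegral_congr_fun measurableSet_Ioc e1, setIntegral_congr_fun measurableSet_Ioi e2,
      integral_Ioc_linexp a (2*c₁) 0 0 1 ha.ne' zero_le_one,
      integral_Ioi_linexp a (2*c₂) (2*c₁-2*c₂) 1 ha i2nn]
    unfold FF
    rw [show -(a*(0:ℝ)) = 0 by ring, Real.exp_zero, mul_one]
    field_simp
    ring
  have hE1 : Real.exp (-a) < 1 := by
    rw [← Real.exp_zero]
    exact Real.exp_lt_exp.mpr (by linarith)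
  have hDpos : 0 < c₁ + (c₂ - c₁) * Real.exp (-a) := by
    nlinarith [Real.exp_pos (-a)]
  constructor
  · -- case d_x ≤ 2 c₁
    intro hcase
    have hgi1 : gi = d_x / (2*c₁) := by rw [hgi, if_pos hcase]
    have hd2 : d_x = 2*c₁*gi := by rw [hgi1]; field_simp
    have hgi_pos : 0 < gi := by rw [hgi1]; positivity
    have hT : (0:ℝ) ≤ 1 - gi := by
      rw [hgi1]
      have : d_x / (2*c₁) ≤ 1 := by
        rw [div_le_one (by positivity)]; linarith
      linarith
    set K : ℝ := Real.exp (-(a*gi)) with hK_def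
    have hKpos : 0 < K := Real.exp_pos _
    have hexp : ∀ w : ℝ, Real.exp (-(a*(w+gi))) = K * Real.exp (-(a*w)) := by
      intro w
      rw [hK_def, ← Real.exp_add]
      congr 1; ring
    have hN : (∫ w in Set.Ioi (0:ℝ), (2 * g (w + gi) - d_x) * Real.exp (-(a * (w + gi))))
        = (2/a^2) * (c₁ * K + (c₂ - c₁) * (K * Real.exp (-(a*(1-gi))))) := by
      have e1 : EqOn (fun w => (2 * g (w + gi) - d_x) * Real.exp (-(a*(w+gi))))
          (fun w => ((2*c₁*K)*w + (2*c₁*gi - d_x)*K) * Real.exp (-(a*w))) (Ioc 0 (1-gi)) := by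
        intro w hw
        simp only [hg]
        rw [if_pos (by linarith [hw.2] : w + gi ≤ 1), hexp w]
        ring
      have e2 : EqOn (fun w => (2 * g (w + gi) - d_x) * Real.exp (-(a*(w+gi))))
          (fun w => ((2*c₂*K)*w + (2*c₁ + 2*c₂*(gi-1) - d_x)*K) * Real.exp (-(a*w))) (Ioi (1-gi)) := by
        intro w hw
        simp only [hg]
        have hw' : (1:ℝ) - gi < w := hw
        rw [if_neg (by push_neg; linarith : ¬ (w + gi ≤ 1)), hexp w]
        ring
      have i2nn : ∀ x ∈ Ioi (1-gi), 0 ≤ ((2*c₂*K)*x + (2*c₁ + 2*c₂*(gi-1) - d_x)*K) * Real.exp (-(a*x)) := by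
        intro x hx
        have hx' : (1:ℝ) - gi < x := hx
        have key : (2*c₂*K)*x + (2*c₁ + 2*c₂*(gi-1) - d_x)*K
            = 2*c₂*(K*(x-(1-gi))) + K*(2*c₁-d_x) := by ring
        have h1 : 0 ≤ (2*c₂*K)*x + (2*c₁ + 2*c₂*(gi-1) - d_x)*K := by
          rw [key]
          exact add_nonneg (mul_nonneg (by linarith) (mul_nonneg hKpos.le (by linarith)))
            (mul_nonneg hKpos.le (by linarith))
        exact mul_nonneg h1 (Real.exp_pos _).le
      have hint1 : IntegrableOn (fun w => (2 * g (w + gi) - d_x) * Real.exp (-(a*(w+gi)))) (Ioc (0:ℝ) (1-gi)) :=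
        ((Continuous.integrableOn_Ioc (by fun_prop))).congr_fun e1.symm measurableSet_Ioc
      have hint2 : IntegrableOn (fun w => (2 * g (w + gi) - d_x) * Real.exp (-(a*(w+gi)))) (Ioi (1-gi)) :=
        (integrableOn_Ioi_linexp a (2*c₂*K) ((2*c₁ + 2*c₂*(gi-1) - d_x)*K) (1-gi) ha i2nn).congr_fun
          e2.symm measurableSet_Ioi
      rw [← Ioc_union_Ioi_eq_Ioi hT,
        setIntegral_union (Ioc_disjoint_Ioi le_rfl) measurableSet_Ioi hint1 hint2,
        setIntegral_congr_fun measurableSet_Ioc e1, setIntegral_congr_fun measurableSet_Ioi e2,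
        integral_Ioc_linexp a (2*c₁*K) ((2*c₁*gi - d_x)*K) 0 (1-gi) ha.ne' hT,
        integral_Ioi_linexp a (2*c₂*K) ((2*c₁ + 2*c₂*(gi-1) - d_x)*K) (1-gi) ha i2nn]
      unfold FF
      rw [show -(a*(0:ℝ)) = 0 by ring, Real.exp_zero, mul_one, hd2]
      field_simp
      ring
    have f1 : Real.exp (-(lam * d_x / c₁)) = K := by
      rw [hK_def]; congr 1
      rw [hgi1]; field_simp; ring
    have f2 : Real.exp (-(a * (1 - d_x / (2 * c₁)))) = Real.exp (-(a*(1-gi))) := by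
      congr 1; rw [hgi1]
    have f3 : Real.exp (-a) = K * Real.exp (-(a*(1-gi))) := by
      rw [hK_def, ← Real.exp_add]; congr 1; ring
    rw [hρ, hN, hD, f1, f2, f3]
    have hne : c₁ + (c₂ - c₁) * (K * Real.exp (-(a*(1-gi)))) ≠ 0 := by
      rw [← f3]; exact hDpos.ne'
    rw [mul_div_mul_left _ _ (div_ne_zero two_ne_zero (pow_ne_zero 2 ha.ne')), div_eq_div_iff hne hne]
    ring
  · -- case 2 c₁ < d_x
    intro hcase
    have hgi2 : gi = 1 + (d_x - 2*c₁) / (2*c₂) := by rw [hgi, if_neg (not_le.mpr hcase)]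
    have hd2 : d_x = 2*c₁ + 2*c₂*(gi-1) := by rw [hgi2]; field_simp; ring
    have hgi_gt : 1 < gi := by
      rw [hgi2]
      have : 0 < (d_x - 2*c₁) / (2*c₂) := div_pos (by linarith) (by positivity)
      linarith
    set K : ℝ := Real.exp (-(a*gi)) with hK_def
    have hexp : ∀ w : ℝ, Real.exp (-(a*(w+gi))) = K * Real.exp (-(a*w)) := by
      intro w
      rw [hK_def, ← Real.exp_add]
      congr 1; ring
    have hN : (∫ w in Set.Ioi (0:ℝ), (2 * g (w + gi) - d_x) * Real.exp (-(a * (w + gi))))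
        = (2*c₂/a^2) * K := by
      have e2 : EqOn (fun w => (2 * g (w + gi) - d_x) * Real.exp (-(a*(w+gi))))
          (fun w => ((2*c₂*K)*w + (2*c₁ + 2*c₂*(gi-1) - d_x)*K) * Real.exp (-(a*w))) (Ioi 0) := by
        intro w hw
        simp only [hg]
        have hw' : (0:ℝ) < w := hw
        rw [if_neg (by push_neg; linarith : ¬ (w + gi ≤ 1)), hexp w]
        ring
      have i2nn : ∀ x ∈ Ioi (0:ℝ), 0 ≤ ((2*c₂*K)*x + (2*c₁ + 2*c₂*(gi-1) - d_x)*K) * Real.exp (-(a*x)) := by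
        intro x hx
        have hx' : (0:ℝ) < x := hx
        have hKpos : 0 < K := Real.exp_pos _
        have h1 : 0 ≤ (2*c₂*K)*x + (2*c₁ + 2*c₂*(gi-1) - d_x)*K := by
          nlinarith [mul_pos (mul_pos hc₂ hKpos) hx']
        exact mul_nonneg h1 (Real.exp_pos _).le
      rw [setIntegral_congr_fun measurableSet_Ioi e2,
        integral_Ioi_linexp a (2*c₂*K) ((2*c₁ + 2*c₂*(gi-1) - d_x)*K) 0 ha i2nn]
      rw [show -(a*(0:ℝ)) = 0 by ring, Real.exp_zero, mul_one, hd2]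
      field_simp
      ring
    have f1 : Real.exp (-(a * (1 + (d_x - 2 * c₁) / (2 * c₂)))) = K := by
      rw [hK_def]; congr 1; rw [hgi2]
    rw [hρ, hN, hD, f1]
    rw [div_eq_div_iff (by positivity) hDpos.ne']
    ring
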